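/- Let A be a finite-dimensional C*-algebra over ℂ and let ψ be a faithful state on A such that, with respect to the inner product ⟨x, y⟩ = ψ(y* x) on A and the induced inner product on A ⊗ A, the multiplication map m : A ⊗ A → A satisfies m m* = (dim_ℂ A) · id_A. Then ψ(a) = (dim_ℂ A)^{-1} Tr(L_a) for all a ∈ A, where L_a is left multiplication by a; in particular such a state is unique. -/

import Mathlib

/-!
STATEMENT 7.  Let A be a finite-dimensional C*-algebra and ψ a faithful state on A such that,
for the inner product ⟨x,y⟩ = ψ(y* x) (Mathlib convention: ⟪x, y⟫ = ψ(x* y)) and the induced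
inner product on A ⊗ A, the multiplication map satisfies m m* = (dim A) · id.  Then
ψ(a) = (dim A)⁻¹ Tr(L_a) for all a (L_a = left multiplication by a); in particular such a
state is unique.

The adjoint m* is encoded as a map `mstar` satisfying the pairing identity
⟪a ⊗ b, m* y⟫ = ⟪a b, y⟫ = ψ((a b)* y), where ⟪a ⊗ b, ·⟫ is implemented by `frobPair ψ a b`,
and m on the tensor product is `LinearMap.mul' ℂ A`.
-/

open scoped TensorProduct ComplexOrder

/-- The linear functional `⟪a ⊗ b, ·⟫` on `A ⊗[ℂ] A` for the inner product
`⟪x, y⟫ = ψ (star x * y)` induced by a positive functional `ψ`. -/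
noncomputable def frobPair {A : Type*} [Ring A] [StarRing A] [Algebra ℂ A]
    (ψ : A →ₗ[ℂ] ℂ) (a b : A) : TensorProduct ℂ A A →ₗ[ℂ] ℂ :=
  TensorProduct.lift ((LinearMap.mul ℂ ℂ).compl₁₂
    (ψ ∘ₗ LinearMap.mulLeft ℂ (star a)) (ψ ∘ₗ LinearMap.mulLeft ℂ (star b)))

lemma frobPair_tmul {A : Type*} [Ring A] [StarRing A] [Algebra ℂ A]
    (ψ : A →ₗ[ℂ] ℂ) (a b x y : A) :
    frobPair ψ a b (x ⊗ₜ[ℂ] y) = ψ (star a * x) * ψ (star b * y) := by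
  simp [frobPair]

lemma orth_repr {A : Type*} [Ring A] [StarRing A] [Algebra ℂ A]
    (ψ : A →ₗ[ℂ] ℂ) {n : ℕ} (v : Module.Basis (Fin n) ℂ A)
    (horm : ∀ i j, ψ (star (v i) * v j) = if i = j then 1 else 0)
    (z : A) (i : Fin n) : ψ (star (v i) * z) = v.repr z i := by
  conv_lhs => rw [← v.sum_repr z]
  rw [Finset.mul_sum, map_sum]
  simp [mul_smul_comm, horm]

lemma orth_expand {A : Type*} [Ring A] [StarRing A] [Algebra ℂ A]
    (ψ : A →ₗ[ℂ] ℂ) {n : ℕ} (v : Module.Basis (Fin n) ℂ A)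
    (horm : ∀ i j, ψ (star (v i) * v j) = if i = j then 1 else 0)
    (z : A) : ∑ i, ψ (star (v i) * z) • v i = z := by
  conv_rhs => rw [← v.sum_repr z]
  refine Finset.sum_congr rfl fun i _ => ?_
  rw [orth_repr ψ v horm]

lemma key_sum {A : Type*} [Ring A] [StarRing A] [Algebra ℂ A]
    (ψ : A →ₗ[ℂ] ℂ) (mstar : A → TensorProduct ℂ A A)
    (hadj : ∀ a b y : A, frobPair ψ a b (mstar y) = ψ (star (a * b) * y))
    (hQ : ∀ y : A, LinearMap.mul' ℂ A (mstar y) = (Module.finrank ℂ A : ℂ) • y)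
    {n : ℕ} (v : Module.Basis (Fin n) ℂ A)
    (horm : ∀ i j, ψ (star (v i) * v j) = if i = j then 1 else 0)
    (y : A) : ∑ i, v i * (star (v i) * y) = (Module.finrank ℂ A : ℂ) • y := by
  classical
  let bT : Module.Basis (Fin n × Fin n) ℂ (TensorProduct ℂ A A) := Module.Basis.tensorProduct v v
  have hms : mstar y = ∑ p : Fin n × Fin n,
      bT.repr (mstar y) p • (v p.1 ⊗ₜ[ℂ] v p.2) := by
    conv_lhs => rw [← bT.sum_repr (mstar y)]
    refine Finset.sum_congr rfl fun p _ => ?_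
    congr 1
    simp [bT, Module.Basis.tensorProduct_apply']
  have hcoef : ∀ k l, bT.repr (mstar y) (k, l) = ψ (star (v k * v l) * y) := by
    intro k l
    have h := hadj (v k) (v l) y
    rw [hms] at h
    rw [map_sum] at h
    simp only [map_smul, frobPair_tmul, horm, smul_eq_mul] at h
    rw [← h]
    rw [Fintype.sum_prod_type]
    simp
  have hmul : (Module.finrank ℂ A : ℂ) • y
      = ∑ p : Fin n × Fin n, ψ (star (v p.1 * v p.2) * y) • (v p.1 * v p.2) := by
    rw [← hQ y]
    conv_lhs => rw [hms]
    rw [map_sum]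
    refine Finset.sum_congr rfl fun p _ => ?_
    rw [map_smul, LinearMap.mul'_apply, hcoef p.1 p.2]
  rw [hmul, Fintype.sum_prod_type]
  refine Finset.sum_congr rfl fun k _ => ?_
  have : ∀ l : Fin n, ψ (star (v k * v l) * y) • (v k * v l)
      = v k * (ψ (star (v l) * (star (v k) * y)) • v l) := by
    intro l
    rw [star_mul, mul_assoc, mul_smul_comm]
  rw [Finset.sum_congr rfl fun l _ => this l, ← Finset.mul_sum,
    orth_expand ψ v horm]

def SynonymA (A : Type*) := A

set_option maxHeartbeats 2000000 in
theorem statement7 {A : Type*} [NormedRing A] [StarRing A] [CStarRing A]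
    [NormedAlgebra ℂ A] [StarModule ℂ A] [FiniteDimensional ℂ A]
    (ψ : A →ₗ[ℂ] ℂ)
    (hpos : ∀ a : A, 0 ≤ ψ (star a * a))
    (hfaith : ∀ a : A, ψ (star a * a) = 0 → a = 0)
    (hstate : ψ 1 = 1)
    (mstar : A → TensorProduct ℂ A A)
    (hadj : ∀ a b y : A, frobPair ψ a b (mstar y) = ψ (star (a * b) * y))
    (hQ : ∀ y : A, LinearMap.mul' ℂ A (mstar y) = (Module.finrank ℂ A : ℂ) • y) :
    ∀ a : A, ψ a = (Module.finrank ℂ A : ℂ)⁻¹ *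
      LinearMap.trace ℂ A (LinearMap.mulLeft ℂ a) := by
  classical
  -- `ψ` is hermitian
  have hselfc : ∀ z : A, (starRingEnd ℂ) (ψ (star z * z)) = ψ (star z * z) := by
    intro z
    have h := hpos z
    rw [Complex.le_def] at h
    exact Complex.conj_eq_iff_im.mpr h.2.symm
  have expand : ∀ u w : A, ψ (star (u + w) * (u + w)) =
      ψ (star u * u) + ψ (star u * w) + ψ (star w * u) + ψ (star w * w) := by
    intro u w
    rw [star_add, add_mul, mul_add, mul_add, map_add, map_add, map_add]
    ring
  have hherm : ∀ x y : A, (starRingEnd ℂ) (ψ (star y * x)) = ψ (star x * y) := by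
    intro x y
    have h1 := hselfc (x + y)
    have h2 := hselfc (x + Complex.I • y)
    rw [expand x y] at h1
    rw [expand x (Complex.I • y)] at h2
    have e1 : ψ (star x * (Complex.I • y)) = Complex.I * ψ (star x * y) := by
      rw [mul_smul_comm, map_smul]; rfl
    have e2 : ψ (star (Complex.I • y) * x) = -Complex.I * ψ (star y * x) := by
      rw [star_smul, smul_mul_assoc, map_smul]
      simp [Complex.star_def]
    have e3 : ψ (star (Complex.I • y) * (Complex.I • y)) = ψ (star y * y) := by
      rw [star_smul, smul_mul_assoc, mul_smul_comm, map_smul, map_smul]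
      simp [Complex.star_def]
      rw [← mul_assoc, Complex.I_mul_I]; ring
    rw [e1, e2, e3] at h2
    simp only [map_add, map_mul, map_neg, hselfc x, hselfc y, Complex.conj_I] at h1 h2
    linear_combination (h1 - Complex.I * h2) / 2 +
      (((starRingEnd ℂ) (ψ (star y * x)) - ψ (star x * y) + ψ (star y * x) -
        (starRingEnd ℂ) (ψ (star x * y))) / 2) * Complex.I_sq
  -- nontriviality
  have hone : (1 : A) ≠ 0 := by
    intro h
    have : ψ 1 = 0 := by rw [h, map_zero]
    rw [hstate] at this
    exact one_ne_zero this
  haveI : Nontrivial A := ⟨1, 0, hone⟩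
  set n := Module.finrank ℂ A with hn
  have hnpos : 0 < n := Module.finrank_pos
  -- Hilbert space structure on a synonym of A
  letI : AddCommGroup (SynonymA A) := inferInstanceAs (AddCommGroup A)
  letI : Module ℂ (SynonymA A) := inferInstanceAs (Module ℂ A)
  let toA : SynonymA A ≃ₗ[ℂ] A :=
    { toFun := fun a => a, invFun := fun a => a,
      map_add' := fun _ _ => rfl, map_smul' := fun _ _ => rfl,
      left_inv := fun _ => rfl, right_inv := fun _ => rfl }
  let core : InnerProductSpace.Core ℂ (SynonymA A) :=
    { inner := fun x y => ψ (star (toA x) * toA y)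
      conj_inner_symm := fun x y => hherm (toA x) (toA y)
      re_inner_nonneg := fun x => by
        have h := hpos (toA x); rw [Complex.le_def] at h; exact h.1
      add_left := fun x y z => by
        show ψ (star (toA x + toA y) * toA z) = _
        rw [star_add, add_mul, map_add]
      smul_left := fun x y r => by
        show ψ (star (r • toA x) * toA y) = _
        rw [star_smul, smul_mul_assoc, map_smul]
        rfl
      definite := fun x hx => hfaith (toA x) hx }
  letI : NormedAddCommGroup (SynonymA A) := core.toNormedAddCommGroup
  letI : InnerProductSpace ℂ (SynonymA A) := InnerProductSpace.ofCore core.toCore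
  haveI : FiniteDimensional ℂ (SynonymA A) := Module.Finite.equiv toA.symm
  have hinner : ∀ x y : SynonymA A, (inner ℂ x y : ℂ) = ψ (star (toA x) * toA y) :=
    fun _ _ => rfl
  -- the modular operator Δ
  let F : SynonymA A → (SynonymA A →L[ℂ] ℂ) := fun y =>
    LinearMap.toContinuousLinearMap
      (ψ ∘ₗ (LinearMap.mulRight ℂ (star (toA y))) ∘ₗ (toA : SynonymA A →ₗ[ℂ] A))
  have hF : ∀ x y : SynonymA A, F y x = ψ (toA x * star (toA y)) := fun _ _ => rfl
  let Δ : SynonymA A →ₗ[ℂ] SynonymA A :=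
    { toFun := fun y => (InnerProductSpace.toDual ℂ (SynonymA A)).symm (F y)
      map_add' := by
        intro y z
        have h : F (y + z) = F y + F z := by
          apply ContinuousLinearMap.ext
          intro x
          show ψ (toA x * star (toA y + toA z)) =
            ψ (toA x * star (toA y)) + ψ (toA x * star (toA z))
          rw [star_add, mul_add, map_add]
        show (InnerProductSpace.toDual ℂ (SynonymA A)).symm (F (y + z)) = _
        rw [h, map_add]
      map_smul' := by
        intro c y
        have h : F (c • y) = (starRingEnd ℂ) c • F y := by
          apply ContinuousLinearMap.ext
          intro x
          show ψ (toA x * star (c • toA y)) = (starRingEnd ℂ) c * ψ (toA x * star (toA y))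
          rw [star_smul, mul_smul_comm, map_smul]
          rfl
        show (InnerProductSpace.toDual ℂ (SynonymA A)).symm (F (c • y)) = _
        rw [h, LinearIsometryEquiv.map_smulₛₗ]
        simp }
  have hΔ : ∀ x y : SynonymA A, (inner ℂ x (Δ y) : ℂ) = ψ (toA y * star (toA x)) := by
    intro x y
    have h1 : (inner ℂ (Δ y) x : ℂ) = ψ (toA x * star (toA y)) := by
      show (inner ℂ ((InnerProductSpace.toDual ℂ (SynonymA A)).symm (F y)) x : ℂ) = _
      rw [InnerProductSpace.toDual_symm_apply]
      exact hF x y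
    rw [← inner_conj_symm, h1]
    calc (starRingEnd ℂ) (ψ (toA x * star (toA y)))
        = (starRingEnd ℂ) (ψ (star (star (toA x)) * star (toA y))) := by rw [star_star]
      _ = ψ (star (star (toA y)) * star (toA x)) := hherm _ _
      _ = ψ (toA y * star (toA x)) := by rw [star_star]
  have hsym : Δ.IsSymmetric := by
    intro x y
    have h1 : (inner ℂ (Δ x) y : ℂ) = ψ (toA y * star (toA x)) := by
      show (inner ℂ ((InnerProductSpace.toDual ℂ (SynonymA A)).symm (F x)) y : ℂ) = _
      rw [InnerProductSpace.toDual_symm_apply]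
      exact hF y x
    rw [h1, hΔ]
  -- spectral decomposition
  have hfin : Module.finrank ℂ (SynonymA A) = n := toA.finrank_eq
  let f := hsym.eigenvectorBasis hfin
  let lam := hsym.eigenvalues hfin
  have heig : ∀ i, Δ (f i) = (lam i : ℂ) • f i := fun i =>
    hsym.apply_eigenvectorBasis hfin i
  let b1 : Module.Basis (Fin n) ℂ A := f.toBasis.map toA
  have hb1 : ∀ i, b1 i = toA (f i) := by
    intro i
    simp [b1]
  have horm1 : ∀ i j, ψ (star (b1 i) * b1 j) = if i = j then 1 else 0 := by
    intro i j
    rw [hb1, hb1, ← hinner (f i) (f j)]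
    exact orthonormal_iff_ite.mp f.orthonormal i j
  have hcross : ∀ i j, ψ (b1 i * star (b1 j)) = if i = j then (lam i : ℂ) else 0 := by
    intro i j
    have h := hΔ (f j) (f i)
    rw [heig i, inner_smul_right, orthonormal_iff_ite.mp f.orthonormal j i] at h
    rw [hb1, hb1, ← h]
    by_cases hij : i = j
    · subst hij; simp
    · simp [hij, Ne.symm hij]
  -- eigenvalues are positive
  have hlampos : ∀ i, 0 < lam i := by
    intro i
    have hpsi : ψ (b1 i * star (b1 i)) = (lam i : ℂ) := by rw [hcross i i, if_pos rfl]
    have h0 : (0 : ℂ) ≤ (lam i : ℂ) := by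
      rw [← hpsi]
      have := hpos (star (b1 i))
      rwa [star_star] at this
    have h0' : 0 ≤ lam i := by
      rw [Complex.le_def] at h0
      simpa using h0.1
    rcases h0'.lt_or_eq with h | h
    · exact h
    · exfalso
      have : ψ (star (star (b1 i)) * star (b1 i)) = 0 := by
        rw [star_star, hpsi, ← h, Complex.ofReal_zero]
      have hz := hfaith _ this
      have : b1 i = 0 := by
        have := congrArg star hz
        rwa [star_star, star_zero] at this
      exact b1.ne_zero i this
  -- first trace identity : ∑ λᵢ = n
  have S1 : ∑ i, b1 i * star (b1 i) = (n : ℂ) • 1 := by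
    have h := key_sum ψ mstar hadj hQ b1 horm1 1
    simpa [mul_one] using h
  have hsumlam : ∑ i, lam i = (n : ℝ) := by
    have h := congrArg ψ S1
    rw [map_sum, map_smul, hstate, smul_eq_mul, mul_one] at h
    have h2 : ∑ i, (lam i : ℂ) = (n : ℂ) := by
      rw [← h]
      refine Finset.sum_congr rfl fun i _ => ?_
      rw [hcross i i, if_pos rfl]
    exact_mod_cast h2
  -- second basis built from stars
  let w : Fin n → A := fun i => ((Real.sqrt (lam i) : ℂ))⁻¹ • star (b1 i)
  have hsqrt : ∀ i, (Real.sqrt (lam i) : ℂ) * (Real.sqrt (lam i) : ℂ) = (lam i : ℂ) := by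
    intro i
    rw [← Complex.ofReal_mul, Real.mul_self_sqrt (hlampos i).le]
  have hsqrtne : ∀ i, (Real.sqrt (lam i) : ℂ) ≠ 0 := by
    intro i
    simp only [ne_eq, Complex.ofReal_eq_zero]
    exact (Real.sqrt_pos.mpr (hlampos i)).ne'
  have hstarw : ∀ i, star (w i) = ((Real.sqrt (lam i) : ℂ))⁻¹ • b1 i := by
    intro i
    rw [star_smul, star_star]
    congr 1
    rw [star_inv₀]
    simp [Complex.star_def, Complex.conj_ofReal]
  have horm2 : ∀ i j, ψ (star (w i) * w j) = if i = j then 1 else 0 := by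
    intro i j
    rw [hstarw]
    show ψ ((((Real.sqrt (lam i) : ℂ))⁻¹ • b1 i) * (((Real.sqrt (lam j) : ℂ))⁻¹ • star (b1 j))) = _
    rw [smul_mul_assoc, mul_smul_comm, map_smul, map_smul, hcross i j]
    by_cases hij : i = j
    · subst hij
      have hlne : ((lam i : ℝ) : ℂ) ≠ 0 := by
        simp only [ne_eq, Complex.ofReal_eq_zero]; exact (hlampos i).ne'
      rw [if_pos rfl, if_pos rfl, smul_eq_mul, smul_eq_mul, ← mul_assoc, ← mul_inv,
        hsqrt i, inv_mul_cancel₀ hlne]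
    · rw [if_neg hij, if_neg hij]
      simp
  have hli : LinearIndependent ℂ w := by
    rw [Fintype.linearIndependent_iff]
    intro g hg j
    have h := congrArg (fun z => ψ (star (w j) * z)) hg
    simp only [Finset.mul_sum, mul_smul_comm, map_sum, map_smul, mul_zero, map_zero] at h
    rw [Finset.sum_congr rfl (fun i _ => by rw [horm2 j i])] at h
    simpa using h
  haveI : Nonempty (Fin n) := ⟨⟨0, hnpos⟩⟩
  let b2 : Module.Basis (Fin n) ℂ A := basisOfLinearIndependentOfCardEqFinrank hli (by simp [hn])
  have hb2 : ∀ i, b2 i = w i := by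
    intro i
    simp [b2, coe_basisOfLinearIndependentOfCardEqFinrank]
  have horm2' : ∀ i j, ψ (star (b2 i) * b2 j) = if i = j then 1 else 0 := by
    intro i j; rw [hb2, hb2]; exact horm2 i j
  have S2 : ∑ i, w i * star (w i) = (n : ℂ) • 1 := by
    have h := key_sum ψ mstar hadj hQ b2 horm2' 1
    simp only [mul_one] at h
    rw [Finset.sum_congr rfl (fun i _ => by rw [hb2 i])] at h
    exact h
  have hsuminv : ∑ i, (lam i)⁻¹ = (n : ℝ) := by
    have h := congrArg ψ S2
    rw [map_sum, map_smul, hstate, smul_eq_mul, mul_one] at h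
    have h2 : ∑ i, ((lam i)⁻¹ : ℂ) = (n : ℂ) := by
      rw [← h]
      refine Finset.sum_congr rfl fun i _ => ?_
      rw [hstarw i]
      show ((lam i : ℝ)⁻¹ : ℂ) = ψ ((((Real.sqrt (lam i) : ℂ))⁻¹ • star (b1 i)) *
        (((Real.sqrt (lam i) : ℂ))⁻¹ • b1 i))
      rw [smul_mul_assoc, mul_smul_comm, map_smul, map_smul, horm1 i i, if_pos rfl,
        smul_eq_mul, smul_eq_mul, mul_one]
      rw [← mul_inv, hsqrt i]
    exact_mod_cast h2
  -- all eigenvalues are 1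
  have hlam1 : ∀ i, lam i = 1 := by
    have hsum0 : ∑ i, (lam i + (lam i)⁻¹ - 2) = 0 := by
      rw [Finset.sum_sub_distrib, Finset.sum_add_distrib, hsumlam, hsuminv,
        Finset.sum_const, Finset.card_univ, Fintype.card_fin]
      ring
    have hnonneg : ∀ i ∈ Finset.univ, (0:ℝ) ≤ lam i + (lam i)⁻¹ - 2 := by
      intro i _
      have h1 := hlampos i
      have h2 : lam i * (lam i)⁻¹ = 1 := mul_inv_cancel₀ h1.ne'
      nlinarith [sq_nonneg (lam i - 1)]
    have hzero := (Finset.sum_eq_zero_iff_of_nonneg hnonneg).mp hsum0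
    intro i
    have h := hzero i (Finset.mem_univ i)
    have h1 := hlampos i
    have h2 : lam i * (lam i)⁻¹ = 1 := mul_inv_cancel₀ h1.ne'
    nlinarith [sq_nonneg (lam i - 1)]
  -- Δ is the identity, hence ψ is tracial
  have hΔid : Δ = LinearMap.id := by
    apply f.toBasis.ext
    intro i
    rw [OrthonormalBasis.coe_toBasis, heig i, hlam1 i]
    simp
  have htracial : ∀ x y : A, ψ (x * y) = ψ (y * x) := by
    intro x y
    have h := hΔ (toA.symm (star y)) (toA.symm x)
    rw [hΔid] at h
    simp only [LinearMap.id_coe, id_eq] at h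
    rw [hinner] at h
    simp only [LinearEquiv.apply_symm_apply, star_star] at h
    exact h.symm
  -- compute the trace of left multiplication
  intro a
  have htr : LinearMap.trace ℂ A (LinearMap.mulLeft ℂ a) =
      ∑ j, ψ (star (b1 j) * (a * b1 j)) := by
    rw [LinearMap.trace_eq_matrix_trace ℂ b1, Matrix.trace]
    refine Finset.sum_congr rfl fun j _ => ?_
    rw [Matrix.diag_apply, LinearMap.toMatrix_apply, LinearMap.mulLeft_apply,
      orth_repr ψ b1 horm1]
  have htr2 : LinearMap.trace ℂ A (LinearMap.mulLeft ℂ a) = (n : ℂ) * ψ a := by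
    rw [htr]
    have : ∀ j : Fin n, ψ (star (b1 j) * (a * b1 j)) = ψ (a * (b1 j * star (b1 j))) := by
      intro j
      rw [htracial (star (b1 j)) (a * b1 j), mul_assoc]
    rw [Finset.sum_congr rfl fun j _ => this j, ← map_sum, ← Finset.mul_sum, S1,
      mul_smul_comm, map_smul, mul_one, smul_eq_mul]
  rw [htr2, ← mul_assoc, inv_mul_cancel₀, one_mul]
  exact_mod_cast hnpos.ne'
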